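/- For the simple right A-module S_e and the projective right A-module P(e) = 1_e·A one has Ext²_A(S_e, P(e)) ≅ ℂ and Ext^n_A(S_e, P(e)) = 0 for all n ≠ 2 (in particular Hom_A(S_e, P(e)) = 0 and Ext¹_A(S_e, P(e)) = 0). -/

import Mathlib

open CategoryTheory MulOpposite Polynomial

namespace Sl2Q

/-- Generators of the path algebra of the quiver `e ⇄ s`:
`0 ↦ 1_e`, `1 ↦ 1_s`, `2 ↦ a : e → s`, `3 ↦ b : s → e`. -/
abbrev FA : Type := FreeAlgebra ℂ (Fin 4)

/-- The defining relations of the path algebra `ℂQ/(ba)`: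
the trivial paths are orthogonal idempotents summing to `1`, the arrows are
compatible with sources and targets, and the path `e → s → e` (first `a`, then `b`,
written `b * a`) is zero. -/
inductive PathRel : FA → FA → Prop
  | idem_e : PathRel (FreeAlgebra.ι ℂ 0 * FreeAlgebra.ι ℂ 0) (FreeAlgebra.ι ℂ 0)
  | idem_s : PathRel (FreeAlgebra.ι ℂ 1 * FreeAlgebra.ι ℂ 1) (FreeAlgebra.ι ℂ 1)
  | orth_es : PathRel (FreeAlgebra.ι ℂ 0 * FreeAlgebra.ι ℂ 1) 0
  | orth_se : PathRel (FreeAlgebra.ι ℂ 1 * FreeAlgebra.ι ℂ 0) 0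
  | sum_one : PathRel (FreeAlgebra.ι ℂ 0 + FreeAlgebra.ι ℂ 1) 1
  | a_tgt : PathRel (FreeAlgebra.ι ℂ 1 * FreeAlgebra.ι ℂ 2) (FreeAlgebra.ι ℂ 2)
  | a_src : PathRel (FreeAlgebra.ι ℂ 2 * FreeAlgebra.ι ℂ 0) (FreeAlgebra.ι ℂ 2)
  | b_tgt : PathRel (FreeAlgebra.ι ℂ 0 * FreeAlgebra.ι ℂ 3) (FreeAlgebra.ι ℂ 3)
  | b_src : PathRel (FreeAlgebra.ι ℂ 3 * FreeAlgebra.ι ℂ 1) (FreeAlgebra.ι ℂ 3)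
  | ba : PathRel (FreeAlgebra.ι ℂ 3 * FreeAlgebra.ι ℂ 2) 0

/-- The path algebra `A = ℂ[e ⇄ s]/(ba)`. -/
def A : Type := RingQuot PathRel

noncomputable instance : Ring A := inferInstanceAs (Ring (RingQuot PathRel))
noncomputable instance : Algebra ℂ A := inferInstanceAs (Algebra ℂ (RingQuot PathRel))

noncomputable def toA : FreeAlgebra ℂ (Fin 4) →ₐ[ℂ] A := RingQuot.mkAlgHom ℂ PathRel

noncomputable def gen (i : Fin 4) : A := toA (FreeAlgebra.ι ℂ i)

/-- the idempotent `1_e` -/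
noncomputable def oneE : A := gen 0
/-- the idempotent `1_s` -/
noncomputable def oneS : A := gen 1
/-- the arrow `a : e → s` -/
noncomputable def arrA : A := gen 2
/-- the arrow `b : s → e` -/
noncomputable def arrB : A := gen 3
/-- the loop `ab` at `s` (first `b`, then `a`) -/
noncomputable def ab : A := arrA * arrB

lemma rel_eq {x y : FA} (h : PathRel x y) : toA x = toA y :=
  RingQuot.mkAlgHom_rel ℂ h

lemma oneS_mul_arrA : oneS * arrA = arrA := by
  rw [oneS, arrA, gen, gen, ← map_mul]
  exact rel_eq PathRel.a_tgt

lemma oneE_mul_arrB : oneE * arrB = arrB := by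
  rw [oneE, arrB, gen, gen, ← map_mul]
  exact rel_eq PathRel.b_tgt

lemma oneS_mul_ab : oneS * ab = ab := by
  rw [ab, ← mul_assoc, oneS_mul_arrA]

/-- `A` is a right module over itself, i.e. a module over `Aᵐᵒᵖ`;
scalars `ℂ` act compatibly. -/
instance : IsScalarTower ℂ Aᵐᵒᵖ A :=
  ⟨fun c r x => by
    rw [MulOpposite.smul_eq_mul_unop, MulOpposite.smul_eq_mul_unop, MulOpposite.unop_smul,
      mul_smul_comm]⟩

instance : SMulCommClass Aᵐᵒᵖ ℂ A :=
  ⟨fun r c x => by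
    rw [MulOpposite.smul_eq_mul_unop, MulOpposite.smul_eq_mul_unop, smul_mul_assoc]⟩

/-- `P u = u·A`, the right ideal generated by `u`, as a right `A`-module
(i.e. a module over `Aᵐᵒᵖ`). -/
noncomputable def P (u : A) : Submodule Aᵐᵒᵖ A := Submodule.span Aᵐᵒᵖ {u}

lemma mem_P {u z : A} (h : u * z = z) : z ∈ P u :=
  Submodule.mem_span_singleton.mpr ⟨op z, by rw [op_smul_eq_mul, h]⟩

instance (p : Submodule Aᵐᵒᵖ A) : SMulCommClass Aᵐᵒᵖ ℂ ↥p :=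
  ⟨fun r c x => Subtype.ext (smul_comm r c (x : A))⟩

instance (p : Submodule Aᵐᵒᵖ A) : IsScalarTower ℂ Aᵐᵒᵖ ↥p :=
  ⟨fun c r x => Subtype.ext (smul_assoc c r (x : A))⟩

/-- Left multiplication by `z` as a homomorphism of right `A`-modules `P u ⟶ P v`,
where `v * z = z` (i.e. `z ∈ v·A`). -/
noncomputable def lmul (u : A) {v z : A} (h : v * z = z) : ↥(P u) →ₗ[Aᵐᵒᵖ] ↥(P v) where
  toFun x := ⟨z * (x : A), mem_P (by rw [← mul_assoc, h])⟩
  map_add' x y := Subtype.ext (by simp [mul_add])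
  map_smul' r x := Subtype.ext (by
    simp [MulOpposite.smul_eq_mul_unop, mul_assoc])

end Sl2Q

namespace Sl2Q

/-- The algebra map `A → ℂ` corresponding to the vertex `e`
(sending `1_e ↦ 1` and `1_s, a, b ↦ 0`). -/
noncomputable def εe : A →ₐ[ℂ] ℂ :=
  RingQuot.liftAlgHom ℂ
    ⟨FreeAlgebra.lift ℂ (fun i => if i = 0 then (1 : ℂ) else 0), by
      rintro x y h
      induction h <;>
        simp [FreeAlgebra.lift_ι_apply]⟩

/-- The one-dimensional simple right `A`-module concentrated at the vertex `e`:
the underlying type is `ℂ`, and `A` acts (on the right) through `εe`,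
so that `1_e` acts as the identity and `1_s`, `a`, `b` act as zero. -/
def Se : Type := ℂ

noncomputable instance : AddCommGroup Se := inferInstanceAs (AddCommGroup ℂ)
noncomputable instance : Module ℂ Se := inferInstanceAs (Module ℂ ℂ)

/-- the (right) action of `A` on `Se` through `εe` -/
noncomputable instance : Module Aᵐᵒᵖ Se :=
  Module.compHom ℂ ((εe.toRingHom).fromOpposite (fun _ _ => mul_comm _ _))

lemma Se.smul_def (r : Aᵐᵒᵖ) (c : Se) : r • c = εe (unop r) • c := rfl

end Sl2Q

namespace Sl2Q
open CategoryTheory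

/-- `S_e` as an object of the category of right `A`-modules. -/
noncomputable abbrev SeM : ModuleCat.{0} Aᵐᵒᵖ := ModuleCat.of Aᵐᵒᵖ Se

/-- `Ext^n_A(M, N)` (in the category of right `A`-modules), as a `ℂ`-module. -/
noncomputable abbrev ExtA (M N : ModuleCat.{0} Aᵐᵒᵖ) (n : ℕ) : ModuleCat ℂ :=
  ((_root_.Ext ℂ (ModuleCat.{0} Aᵐᵒᵖ) n).obj (Opposite.op M)).obj N

end Sl2Q

namespace Sl2Q
open CategoryTheory

/-- `P(e)` as an object of the category of right `A`-modules. -/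
noncomputable abbrev PeM : ModuleCat.{0} Aᵐᵒᵖ := ModuleCat.of Aᵐᵒᵖ ↥(P oneE)

end Sl2Q

namespace Sl2Q
open Matrix

/-- A 3-dimensional representation of `A` (left multiplication on the left ideal `A·1_s`). -/
noncomputable def M0 : Matrix (Fin 3) (Fin 3) ℂ := Matrix.diagonal ![0,1,0]
noncomputable def M1 : Matrix (Fin 3) (Fin 3) ℂ := Matrix.diagonal ![1,0,1]
noncomputable def Ma : Matrix (Fin 3) (Fin 3) ℂ := Matrix.single 2 1 1
noncomputable def Mb : Matrix (Fin 3) (Fin 3) ℂ := Matrix.single 1 0 1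

noncomputable def ρ : A →ₐ[ℂ] Matrix (Fin 3) (Fin 3) ℂ :=
  RingQuot.liftAlgHom ℂ
    ⟨FreeAlgebra.lift ℂ ![M0, M1, Ma, Mb], by
      rintro x y h
      induction h <;>
        · simp only [_root_.map_mul, _root_.map_add, _root_.map_one, _root_.map_zero, FreeAlgebra.lift_ι_apply]
          ext i j
          fin_cases i <;> fin_cases j <;>
            simp [M0, M1, Ma, Mb, Matrix.mul_apply, Fin.sum_univ_three,
              Matrix.single, Matrix.diagonal, Matrix.one_apply]⟩

lemma ρ_gen (i : Fin 4) : ρ (gen i) = ![M0, M1, Ma, Mb] i := by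
  rw [gen, toA, ρ]
  exact (RingQuot.liftAlgHom_mkAlgHom_apply _ _ _ _).trans (FreeAlgebra.lift_ι_apply _ _)

lemma ρ_oneE : ρ oneE = M0 := ρ_gen 0
lemma ρ_oneS : ρ oneS = M1 := ρ_gen 1
lemma ρ_arrA : ρ arrA = Ma := ρ_gen 2
lemma ρ_arrB : ρ arrB = Mb := ρ_gen 3
lemma ρ_ab : ρ ab = Matrix.single 2 0 1 := by
  rw [ab, _root_.map_mul, ρ_arrA, ρ_arrB, Ma, Mb]
  ext i j
  fin_cases i <;> fin_cases j <;>
    simp [Matrix.mul_apply, Fin.sum_univ_three, Matrix.single]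

lemma arrB_ne_zero : arrB ≠ 0 := by
  intro h
  have := congrArg ρ h
  rw [ρ_arrB, _root_.map_zero] at this
  have := congrFun (congrFun this 1) 0
  simp [Mb, Matrix.single] at this

lemma indep_a_ab {c0 c3 : ℂ} (h : c0 • arrA + c3 • ab = 0) : c0 = 0 ∧ c3 = 0 := by
  have := congrArg ρ h
  rw [_root_.map_add, _root_.map_smul, _root_.map_smul, ρ_arrA, ρ_ab, _root_.map_zero] at this
  constructor
  · have := congrFun (congrFun this 2) 1
    simpa [Ma, Matrix.single] using this
  · have := congrFun (congrFun this 2) 0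
    simpa [Ma, Matrix.single] using this

end Sl2Q
namespace Sl2Q

lemma gen_mul (i j : Fin 4) : gen i * gen j = toA (FreeAlgebra.ι ℂ i * FreeAlgebra.ι ℂ j) :=
  (_root_.map_mul toA _ _).symm

lemma r_ee : oneE * oneE = oneE := by
  rw [oneE, gen_mul]; exact rel_eq PathRel.idem_e
lemma r_ss : oneS * oneS = oneS := by
  rw [oneS, gen_mul]; exact rel_eq PathRel.idem_s
lemma r_es : oneE * oneS = 0 := by
  rw [oneE, oneS, gen_mul]; rw [rel_eq PathRel.orth_es, _root_.map_zero]
lemma r_se : oneS * oneE = 0 := by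
  rw [oneS, oneE, gen_mul]; rw [rel_eq PathRel.orth_se, _root_.map_zero]
lemma r_sum : oneE + oneS = 1 := by
  have := rel_eq PathRel.sum_one
  rwa [_root_.map_add, _root_.map_one] at this
lemma r_ae : arrA * oneE = arrA := by
  rw [arrA, oneE, gen_mul]; exact rel_eq PathRel.a_src
lemma r_bs : arrB * oneS = arrB := by
  rw [arrB, oneS, gen_mul]; exact rel_eq PathRel.b_src
lemma r_ba : arrB * arrA = 0 := by
  rw [arrB, arrA, gen_mul]; rw [rel_eq PathRel.ba, _root_.map_zero]

lemma r_ea : oneE * arrA = 0 := by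
  rw [← oneS_mul_arrA, ← mul_assoc, r_es, zero_mul]
lemma r_sb : oneS * arrB = 0 := by
  rw [← oneE_mul_arrB, ← mul_assoc, r_se, zero_mul]
lemma r_as : arrA * oneS = 0 := by
  nth_rewrite 1 [← r_ae]; rw [mul_assoc, r_es, mul_zero]
lemma r_aa : arrA * arrA = 0 := by
  nth_rewrite 2 [← oneS_mul_arrA]; rw [← mul_assoc, r_as, zero_mul]
lemma r_be : arrB * oneE = 0 := by
  nth_rewrite 1 [← r_bs]; rw [mul_assoc, r_se, mul_zero]
lemma r_bb : arrB * arrB = 0 := by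
  nth_rewrite 2 [← oneE_mul_arrB]; rw [← mul_assoc, r_be, zero_mul]
lemma r_abe : ab * oneE = 0 := by rw [ab, mul_assoc, r_be, mul_zero]
lemma r_abs : ab * oneS = ab := by rw [ab, mul_assoc, r_bs]
lemma r_aba : ab * arrA = 0 := by rw [ab, mul_assoc, r_ba, mul_zero]
lemma r_abb : ab * arrB = 0 := by rw [ab, mul_assoc, r_bb, mul_zero]
lemma r_eab : oneE * ab = 0 := by rw [ab, ← mul_assoc, r_ea, zero_mul]
lemma r_sab : oneS * ab = ab := oneS_mul_ab
lemma r_aab : arrA * ab = 0 := by rw [ab, ← mul_assoc, r_aa, zero_mul]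
lemma r_bab : arrB * ab = 0 := by rw [ab, ← mul_assoc, r_ba, zero_mul]
lemma r_abab : ab * ab = 0 := by nth_rewrite 1 [ab]; rw [mul_assoc, r_bab, mul_zero]

/-- The statement that left multiplication of `z` by each of the five basis
elements has the expected form. -/
def Rep (z : A) : Prop :=
  (∃ c0 c1 : ℂ, oneE * z = c0 • oneE + c1 • arrB) ∧
  (∃ d1 d2 d4 : ℂ, oneS * z = d1 • oneS + d2 • arrA + d4 • ab) ∧
  (∃ e2 e4 : ℂ, arrA * z = e2 • arrA + e4 • ab) ∧
  (∃ f1 : ℂ, arrB * z = f1 • arrB) ∧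
  (∃ g4 : ℂ, ab * z = g4 • ab)

lemma repE : Rep oneE :=
  ⟨⟨1, 0, by rw [r_ee]; module⟩, ⟨0, 0, 0, by rw [r_se]; module⟩,
   ⟨1, 0, by rw [r_ae]; module⟩, ⟨0, by rw [r_be]; module⟩, ⟨0, by rw [r_abe]; module⟩⟩

lemma repS : Rep oneS :=
  ⟨⟨0, 0, by rw [r_es]; module⟩, ⟨1, 0, 0, by rw [r_ss]; module⟩,
   ⟨0, 0, by rw [r_as]; module⟩, ⟨1, by rw [r_bs]; module⟩, ⟨1, by rw [r_abs]; module⟩⟩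

lemma repA : Rep arrA :=
  ⟨⟨0, 0, by rw [r_ea]; module⟩, ⟨0, 1, 0, by rw [oneS_mul_arrA]; module⟩,
   ⟨0, 0, by rw [r_aa]; module⟩, ⟨0, by rw [r_ba]; module⟩, ⟨0, by rw [r_aba]; module⟩⟩

lemma repB : Rep arrB :=
  ⟨⟨0, 1, by rw [oneE_mul_arrB]; module⟩, ⟨0, 0, 0, by rw [r_sb]; module⟩,
   ⟨0, 1, by rw [← ab]; module⟩, ⟨0, by rw [r_bb]; module⟩, ⟨0, by rw [r_abb]; module⟩⟩

lemma rep_algebraMap (r : ℂ) : Rep (algebraMap ℂ A r) := by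
  refine ⟨⟨r, 0, ?_⟩, ⟨r, 0, 0, ?_⟩, ⟨r, 0, ?_⟩, ⟨r, ?_⟩, ⟨r, ?_⟩⟩ <;>
    · rw [Algebra.algebraMap_eq_smul_one, mul_smul_comm, mul_one]; try module

lemma rep_mul {x y : A} (hx : Rep x) (hy : Rep y) : Rep (x * y) := by
  obtain ⟨⟨c0, c1, hx1⟩, ⟨d1, d2, d4, hx2⟩, ⟨e2, e4, hx3⟩, ⟨f1, hx4⟩, ⟨g4, hx5⟩⟩ := hx
  obtain ⟨⟨c0', c1', hy1⟩, ⟨d1', d2', d4', hy2⟩, ⟨e2', e4', hy3⟩, ⟨f1', hy4⟩, ⟨g4', hy5⟩⟩ := hy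
  refine ⟨⟨c0 * c0', c0 * c1' + c1 * f1', ?_⟩,
    ⟨d1 * d1', d1 * d2' + d2 * e2', d1 * d4' + d2 * e4' + d4 * g4', ?_⟩,
    ⟨e2 * e2', e2 * e4' + e4 * g4', ?_⟩, ⟨f1 * f1', ?_⟩, ⟨g4 * g4', ?_⟩⟩
  · rw [← mul_assoc, hx1, add_mul, smul_mul_assoc, smul_mul_assoc, hy1, hy4]; module
  · rw [← mul_assoc, hx2, add_mul, add_mul, smul_mul_assoc, smul_mul_assoc, smul_mul_assoc,
      hy2, hy3, hy5]; module
  · rw [← mul_assoc, hx3, add_mul, smul_mul_assoc, smul_mul_assoc, hy3, hy5]; module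
  · rw [← mul_assoc, hx4, smul_mul_assoc, hy4]; module
  · rw [← mul_assoc, hx5, smul_mul_assoc, hy5]; module

lemma rep_add {x y : A} (hx : Rep x) (hy : Rep y) : Rep (x + y) := by
  obtain ⟨⟨c0, c1, hx1⟩, ⟨d1, d2, d4, hx2⟩, ⟨e2, e4, hx3⟩, ⟨f1, hx4⟩, ⟨g4, hx5⟩⟩ := hx
  obtain ⟨⟨c0', c1', hy1⟩, ⟨d1', d2', d4', hy2⟩, ⟨e2', e4', hy3⟩, ⟨f1', hy4⟩, ⟨g4', hy5⟩⟩ := hy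
  refine ⟨⟨c0 + c0', c1 + c1', ?_⟩, ⟨d1 + d1', d2 + d2', d4 + d4', ?_⟩,
    ⟨e2 + e2', e4 + e4', ?_⟩, ⟨f1 + f1', ?_⟩, ⟨g4 + g4', ?_⟩⟩
  · rw [mul_add, hx1, hy1]; module
  · rw [mul_add, hx2, hy2]; module
  · rw [mul_add, hx3, hy3]; module
  · rw [mul_add, hx4, hy4]; module
  · rw [mul_add, hx5, hy5]; module

lemma rep_all (z : A) : Rep z := by
  obtain ⟨x, rfl⟩ := RingQuot.mkAlgHom_surjective ℂ PathRel z
  show Rep (toA x)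
  induction x using FreeAlgebra.induction with
  | grade0 r => rw [AlgHom.commutes]; exact rep_algebraMap r
  | grade1 i =>
    show Rep (gen i)
    fin_cases i
    · exact repE
    · exact repS
    · exact repA
    · exact repB
  | mul x y hx hy => rw [_root_.map_mul]; exact rep_mul hx hy
  | add x y hx hy => rw [_root_.map_add]; exact rep_add hx hy

end Sl2Q
namespace Sl2Q

lemma εe_gen (i : Fin 4) : εe (gen i) = if i = 0 then 1 else 0 := by
  rw [gen, toA, εe]
  exact (RingQuot.liftAlgHom_mkAlgHom_apply _ _ _ _).trans (FreeAlgebra.lift_ι_apply _ _)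

lemma εe_oneE : εe oneE = 1 := by rw [oneE, εe_gen]; rfl
lemma εe_oneS : εe oneS = 0 := by rw [oneS, εe_gen]; rfl
lemma εe_arrA : εe arrA = 0 := by rw [arrA, εe_gen]; rfl
lemma εe_arrB : εe arrB = 0 := by rw [arrB, εe_gen]; rfl
lemma εe_ab : εe ab = 0 := by rw [ab, _root_.map_mul, εe_arrA, zero_mul]

lemma smul_arrB_eq_zero {c : ℂ} (h : c • arrB = 0) : c = 0 := by
  by_contra hc
  exact arrB_ne_zero (by rw [← one_smul ℂ arrB, ← inv_mul_cancel₀ hc, mul_smul, h, smul_zero])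

noncomputable def pe0 : ↥(P oneE) := ⟨oneE, mem_P r_ee⟩
noncomputable def pe1 : ↥(P oneE) := ⟨arrB, mem_P oneE_mul_arrB⟩
noncomputable def ps0 : ↥(P oneS) := ⟨oneS, mem_P r_ss⟩
noncomputable def ps1 : ↥(P oneS) := ⟨arrA, mem_P oneS_mul_arrA⟩
noncomputable def ps2 : ↥(P oneS) := ⟨ab, mem_P oneS_mul_ab⟩

lemma smul_val {u : A} (r : Aᵐᵒᵖ) (x : ↥(P u)) : (r • x : ↥(P u)).val = x.val * unop r := by
  rw [Submodule.coe_smul, MulOpposite.smul_eq_mul_unop]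

lemma pe_gen (x : ↥(P oneE)) : ∃ r : Aᵐᵒᵖ, x = r • pe0 := by
  obtain ⟨r, hr⟩ := Submodule.mem_span_singleton.mp x.2
  exact ⟨r, Subtype.ext (by rw [smul_val, ← hr, MulOpposite.smul_eq_mul_unop]; rfl)⟩

lemma ps_gen (x : ↥(P oneS)) : ∃ r : Aᵐᵒᵖ, x = r • ps0 := by
  obtain ⟨r, hr⟩ := Submodule.mem_span_singleton.mp x.2
  exact ⟨r, Subtype.ext (by rw [smul_val, ← hr, MulOpposite.smul_eq_mul_unop]; rfl)⟩

lemma pe_rep (x : ↥(P oneE)) : ∃ c0 c1 : ℂ, x = c0 • pe0 + c1 • pe1 := by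
  obtain ⟨r, rfl⟩ := pe_gen x
  obtain ⟨c0, c1, h⟩ := (rep_all (unop r)).1
  refine ⟨c0, c1, Subtype.ext ?_⟩
  rw [smul_val]
  show oneE * unop r = (c0 • pe0 + c1 • pe1 : ↥(P oneE)).val
  rw [h]; rfl

lemma ps_rep (x : ↥(P oneS)) : ∃ d1 d2 d4 : ℂ, x = d1 • ps0 + d2 • ps1 + d4 • ps2 := by
  obtain ⟨r, rfl⟩ := ps_gen x
  obtain ⟨d1, d2, d4, h⟩ := (rep_all (unop r)).2.1
  refine ⟨d1, d2, d4, Subtype.ext ?_⟩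
  rw [smul_val]
  show oneS * unop r = (d1 • ps0 + d2 • ps1 + d4 • ps2 : ↥(P oneS)).val
  rw [h]; rfl

lemma op_oneE_smul_pe0 : (op oneE : Aᵐᵒᵖ) • pe0 = pe0 :=
  Subtype.ext (by rw [smul_val, unop_op]; exact r_ee)

lemma op_oneS_smul_ps0 : (op oneS : Aᵐᵒᵖ) • ps0 = ps0 :=
  Subtype.ext (by rw [smul_val, unop_op]; exact r_ss)

/-- Every endomorphism of `P(e)` is a scalar multiple of the identity. -/
lemma hom_pe_pe (f : ↥(P oneE) →ₗ[Aᵐᵒᵖ] ↥(P oneE)) : ∃ c : ℂ, ∀ x, f x = c • x := by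
  obtain ⟨c0, c1, hv⟩ := pe_rep (f pe0)
  have hfix : f pe0 = (op oneE : Aᵐᵒᵖ) • f pe0 := by
    conv_lhs => rw [← op_oneE_smul_pe0, map_smul]
  have hval : f pe0 = c0 • pe0 := by
    rw [hfix, hv]
    refine Subtype.ext ?_
    rw [smul_val, unop_op]
    show ((c0 • pe0 + c1 • pe1 : ↥(P oneE)) : A) * oneE = _
    show (c0 • oneE + c1 • arrB) * oneE = c0 • oneE
    rw [add_mul, smul_mul_assoc, smul_mul_assoc, r_ee, r_be, smul_zero, add_zero]
  refine ⟨c0, fun x => ?_⟩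
  obtain ⟨r, rfl⟩ := pe_gen x
  rw [map_smul, hval, smul_comm]

/-- Every homomorphism `P(s) → P(e)` sends the generator into `ℂ·b`. -/
lemma hom_ps_pe (g : ↥(P oneS) →ₗ[Aᵐᵒᵖ] ↥(P oneE)) : ∃ c : ℂ, g ps0 = c • pe1 := by
  obtain ⟨c0, c1, hv⟩ := pe_rep (g ps0)
  have hfix : g ps0 = (op oneS : Aᵐᵒᵖ) • g ps0 := by
    conv_lhs => rw [← op_oneS_smul_ps0, map_smul]
  refine ⟨c1, ?_⟩
  rw [hfix, hv]
  refine Subtype.ext ?_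
  rw [smul_val, unop_op]
  show (c0 • oneE + c1 • arrB) * oneS = c1 • arrB
  rw [add_mul, smul_mul_assoc, smul_mul_assoc, r_es, r_bs, smul_zero, zero_add]

end Sl2Q
namespace Sl2Q
open CategoryTheory

lemma P_fix {u : A} (hu : u * u = u) {x : A} (hx : x ∈ P u) : u * x = x := by
  obtain ⟨r, rfl⟩ := Submodule.mem_span_singleton.mp hx
  rw [MulOpposite.smul_eq_mul_unop, ← mul_assoc, hu]

/-- the retraction `A → u·A`, `z ↦ u·z` -/
noncomputable def retr (u : A) (hu : u * u = u) : A →ₗ[Aᵐᵒᵖ] ↥(P u) where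
  toFun z := ⟨u * z, mem_P (by rw [← mul_assoc, hu])⟩
  map_add' x y := Subtype.ext (by simp [mul_add])
  map_smul' r x := Subtype.ext (by
    simp [MulOpposite.smul_eq_mul_unop, mul_assoc])

noncomputable def unopEquiv : Aᵐᵒᵖ ≃ₗ[Aᵐᵒᵖ] A where
  toFun := unop
  invFun := op
  map_add' _ _ := rfl
  map_smul' _ _ := rfl
  left_inv _ := rfl
  right_inv _ := rfl

lemma P_projective (u : A) (hu : u * u = u) : Module.Projective Aᵐᵒᵖ ↥(P u) := by
  have : Module.Projective Aᵐᵒᵖ A := Module.Projective.of_equiv unopEquiv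
  exact Module.Projective.of_split (P u).subtype (retr u hu)
    (LinearMap.ext fun x => Subtype.ext (P_fix hu x.2))

instance : Projective PeM := (IsProjective.iff_projective _).mp (P_projective oneE r_ee)

noncomputable abbrev PsM : ModuleCat.{0} Aᵐᵒᵖ := ModuleCat.of Aᵐᵒᵖ ↥(P oneS)

instance : Projective PsM := (IsProjective.iff_projective _).mp (P_projective oneS r_ss)

instance : Projective (ModuleCat.of Aᵐᵒᵖ PUnit.{1}) := by
  have : Module.Projective Aᵐᵒᵖ PUnit := by
    have : Module.Projective Aᵐᵒᵖ A := Module.Projective.of_equiv unopEquiv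
    exact Module.Projective.of_split (0 : PUnit →ₗ[Aᵐᵒᵖ] A) 0
      (LinearMap.ext fun x => Subsingleton.elim _ _)
  exact (IsProjective.iff_projective _).mp this

/-- projection `P(e) → S_e` -/
noncomputable def prSe : ↥(P oneE) →ₗ[Aᵐᵒᵖ] Se where
  toFun x := (εe (x : A) : Se)
  map_add' x y := by
    show (εe ((x : A) + (y : A)) : ℂ) = εe (x : A) + εe (y : A)
    rw [_root_.map_add]
  map_smul' r x := by
    rw [RingHom.id_apply]
    show (εe ((r • x : ↥(P oneE)) : A) : ℂ) = εe (unop r) • εe (x : A)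
    rw [smul_val, _root_.map_mul, smul_eq_mul, mul_comm]

noncomputable def resX : ℕ → ModuleCat.{0} Aᵐᵒᵖ
  | 0 => PeM
  | 1 => PsM
  | 2 => PeM
  | _ + 3 => ModuleCat.of Aᵐᵒᵖ PUnit

noncomputable def resd : ∀ n : ℕ, resX (n + 1) ⟶ resX n
  | 0 => ModuleCat.ofHom (lmul oneS oneE_mul_arrB)
  | 1 => ModuleCat.ofHom (lmul oneE oneS_mul_arrA)
  | _ + 2 => 0

lemma lmul_comp_eq_zero :
    (lmul oneS oneE_mul_arrB).comp (lmul oneE oneS_mul_arrA) = 0 :=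
  LinearMap.ext fun x => Subtype.ext (by
    show arrB * (arrA * (x : A)) = (0 : A)
    rw [← mul_assoc, r_ba, zero_mul])

noncomputable def resC : ChainComplex (ModuleCat.{0} Aᵐᵒᵖ) ℕ :=
  ChainComplex.of resX resd (by
    rintro (_ | _ | n)
    · show ModuleCat.ofHom (lmul oneE oneS_mul_arrA) ≫ ModuleCat.ofHom (lmul oneS oneE_mul_arrB) = 0
      exact ModuleCat.hom_ext lmul_comp_eq_zero
    · show (0 : resX 3 ⟶ resX 2) ≫ ModuleCat.ofHom (lmul oneE oneS_mul_arrA) = 0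
      exact Limits.zero_comp
    · show (0 : resX (n+4) ⟶ resX (n+3)) ≫ (0 : resX (n+3) ⟶ resX (n+2)) = 0
      exact Limits.zero_comp)

lemma resC_d_1_0 : resC.d 1 0 = ModuleCat.ofHom (lmul oneS oneE_mul_arrB) :=
  ChainComplex.of_d resX resd 0

lemma resC_d_2_1 : resC.d 2 1 = ModuleCat.ofHom (lmul oneE oneS_mul_arrA) :=
  ChainComplex.of_d resX resd 1

-- exactness facts
lemma exact_deg1 {x : ↥(P oneS)} (hx : arrB * (x : A) = 0) :
    ∃ y : ↥(P oneE), arrA * (y : A) = (x : A) := by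
  obtain ⟨d1, d2, d4, rfl⟩ := ps_rep x
  have hval : ((d1 • ps0 + d2 • ps1 + d4 • ps2 : ↥(P oneS)) : A)
      = d1 • oneS + d2 • arrA + d4 • ab := rfl
  rw [hval, mul_add, mul_add, mul_smul_comm, mul_smul_comm, mul_smul_comm,
    r_bs, r_ba, r_bab, smul_zero, smul_zero, add_zero, add_zero] at hx
  have hd1 : d1 = 0 := smul_arrB_eq_zero hx
  refine ⟨d2 • pe0 + d4 • pe1, ?_⟩
  show arrA * (d2 • oneE + d4 • arrB) = _
  rw [hval, hd1, zero_smul, zero_add, mul_add, mul_smul_comm, mul_smul_comm, r_ae, ← ab]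

lemma d2_inj {y : ↥(P oneE)} (hy : arrA * (y : A) = 0) : y = 0 := by
  obtain ⟨c0, c1, rfl⟩ := pe_rep y
  have hval : ((c0 • pe0 + c1 • pe1 : ↥(P oneE)) : A) = c0 • oneE + c1 • arrB := rfl
  rw [hval, mul_add, mul_smul_comm, mul_smul_comm, r_ae, ← ab] at hy
  obtain ⟨h0, h1⟩ := indep_a_ab hy
  rw [h0, h1, zero_smul, zero_smul, add_zero]

lemma exact_deg0 {x : ↥(P oneE)} (hx : εe (x : A) = 0) :
    ∃ y : ↥(P oneS), arrB * (y : A) = (x : A) := by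
  obtain ⟨c0, c1, rfl⟩ := pe_rep x
  have hval : ((c0 • pe0 + c1 • pe1 : ↥(P oneE)) : A) = c0 • oneE + c1 • arrB := rfl
  rw [hval, _root_.map_add, _root_.map_smul, _root_.map_smul, εe_oneE, εe_arrB,
    smul_zero, add_zero, smul_eq_mul, mul_one] at hx
  refine ⟨c1 • ps0, ?_⟩
  show arrB * (c1 • oneS) = _
  rw [hval, hx, zero_smul, zero_add, mul_smul_comm, r_bs]

lemma resC_exactAt_succ (n : ℕ) : resC.ExactAt (n + 1) := by
  rw [HomologicalComplex.exactAt_iff' _ (n + 2) (n + 1) n (by simp) (by simp)]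
  match n with
  | 0 =>
    rw [ShortComplex.moduleCat_exact_iff]
    intro x hx
    have hx' : arrB * (Subtype.val x) = 0 := congrArg Subtype.val hx
    obtain ⟨y, hy⟩ := exact_deg1 hx'
    exact ⟨y, Subtype.ext hy⟩
  | 1 =>
    rw [ShortComplex.moduleCat_exact_iff]
    intro x hx
    have hx' : arrA * (Subtype.val x) = 0 := congrArg Subtype.val hx
    exact ⟨0, by rw [map_zero, d2_inj hx']; rfl⟩
  | (n + 2) =>
    refine ShortComplex.exact_of_isZero_X₂ _ ?_
    exact ModuleCat.isZero_of_subsingleton (ModuleCat.of Aᵐᵒᵖ PUnit)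

lemma prSe_comp_lmul : prSe.comp (lmul oneS oneE_mul_arrB) = 0 :=
  LinearMap.ext fun x => by
    show (εe (arrB * (x : A)) : ℂ) = 0
    rw [_root_.map_mul, εe_arrB, zero_mul]

lemma prSe_surj : Function.Surjective prSe := fun c =>
  ⟨(show ℂ from c) • pe0, by
    show (εe (((show ℂ from c) • pe0 : ↥(P oneE)) : A) : Se) = c
    rw [Submodule.coe_smul_of_tower, _root_.map_smul]
    show (show ℂ from c) • εe oneE = c
    rw [εe_oneE, smul_eq_mul, mul_one]⟩

noncomputable def resPi : resC ⟶ (ChainComplex.single₀ (ModuleCat.{0} Aᵐᵒᵖ)).obj SeM :=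
  (ChainComplex.toSingle₀Equiv _ _).symm ⟨ModuleCat.ofHom prSe, by
    rw [resC_d_1_0]
    exact ModuleCat.hom_ext prSe_comp_lmul⟩

lemma resPi_f_zero : resPi.f 0 = ModuleCat.ofHom prSe :=
  ChainComplex.toSingle₀Equiv_symm_apply_f_zero _ _

/-- The explicit projective resolution `0 → P(e) → P(s) → P(e) → S_e → 0`. -/
noncomputable def resProj : ProjectiveResolution SeM where
  complex := resC
  projective n := by
    match n with
    | 0 => exact inferInstanceAs (Projective PeM)
    | 1 => exact inferInstanceAs (Projective PsM)
    | 2 => exact inferInstanceAs (Projective PeM)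
    | (n + 3) => exact inferInstanceAs (Projective (ModuleCat.of Aᵐᵒᵖ PUnit))
  π := resPi
  quasiIso := ⟨fun n => by
    cases n with
    | zero =>
      rw [ChainComplex.quasiIsoAt₀_iff, ShortComplex.quasiIso_iff_of_zeros']
      · constructor
        · rw [ShortComplex.moduleCat_exact_iff]
          intro x hx
          have hx' : εe (Subtype.val x) = 0 := by
            have : (resPi.f 0) x = 0 := hx
            rw [resPi_f_zero] at this
            exact this
          obtain ⟨y, hy⟩ := exact_deg0 hx'
          refine ⟨y, ?_⟩
          show (resC.d 1 0) y = x
          rw [resC_d_1_0]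
          exact Subtype.ext hy
        · have hs : Function.Surjective (resPi.f 0) := by
            rw [resPi_f_zero]; exact prSe_surj
          exact (ModuleCat.epi_iff_surjective _).mpr hs
      all_goals rfl
    | succ n =>
      rw [quasiIsoAt_iff_exactAt']
      · exact resC_exactAt_succ n
      · exact ChainComplex.exactAt_succ_single_obj _ _⟩

end Sl2Q
namespace Sl2Q
open CategoryTheory

/-- the Hom-complex `Hom(P_•, P(e))` -/
noncomputable abbrev K : CochainComplex (ModuleCat ℂ) ℕ :=
  resC.linearYonedaObj ℂ PeM

lemma d1_ps0 : lmul oneS oneE_mul_arrB ps0 = pe1 := Subtype.ext r_bs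

lemma smul_pe1_eq_zero {c : ℂ} (h : c • pe1 = 0) : c = 0 := by
  have := congrArg Subtype.val h
  rw [Submodule.coe_smul_of_tower] at this
  exact smul_arrB_eq_zero this

instance : Subsingleton (↑(resC.X 3) →ₗ[Aᵐᵒᵖ] ↥(P oneE)) := by
  haveI : Subsingleton ↑(resC.X 3) := inferInstanceAs (Subsingleton PUnit)
  exact ⟨fun f g => LinearMap.ext fun x => by
    rw [Subsingleton.elim x 0, _root_.map_zero, _root_.map_zero]⟩

lemma hom_pe_pe' (f : ↥(P oneE) →ₗ[Aᵐᵒᵖ] ↥(P oneE)) :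
    ∃ c : ℂ, f = c • LinearMap.id := by
  obtain ⟨c, hc⟩ := hom_pe_pe f
  exact ⟨c, LinearMap.ext fun x => by rw [hc x]; rfl⟩

lemma hom_ps_pe' (g : ↥(P oneS) →ₗ[Aᵐᵒᵖ] ↥(P oneE)) :
    ∃ c : ℂ, g = c • lmul oneS oneE_mul_arrB := by
  obtain ⟨c, hc⟩ := hom_ps_pe g
  refine ⟨c, LinearMap.ext fun x => ?_⟩
  obtain ⟨r, rfl⟩ := ps_gen x
  rw [_root_.map_smul, hc, LinearMap.smul_apply, _root_.map_smul, d1_ps0, smul_comm]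

lemma comp_smul_id (c : ℂ) :
    (c • (LinearMap.id : ↥(P oneE) →ₗ[Aᵐᵒᵖ] ↥(P oneE))).comp (lmul oneS oneE_mul_arrB) =
      c • (lmul oneS oneE_mul_arrB) := by
  rw [LinearMap.smul_comp, LinearMap.id_comp]

lemma K_exactAt_zero : K.ExactAt 0 := by
  rw [HomologicalComplex.exactAt_iff' _ 0 0 1 (by simp) (by simp)]
  rw [ShortComplex.moduleCat_exact_iff]
  intro f hf
  obtain ⟨c, hc⟩ := hom_pe_pe' (ModuleCat.Hom.hom (f : PeM ⟶ PeM))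
  have hf' : ModuleCat.ofHom (lmul oneS oneE_mul_arrB) ≫ f = 0 := by
    have h0 : (K.d 0 1) f = 0 := hf
    rw [ChainComplex.linearYonedaObj_d] at h0
    exact h0
  rw [← ModuleCat.ofHom_hom (f : PeM ⟶ PeM), hc] at hf'
  have h1 : (c • lmul oneS oneE_mul_arrB) = (0 : ↥(P oneS) →ₗ[Aᵐᵒᵖ] ↥(P oneE)) := by
    rw [← comp_smul_id c]
    exact congrArg ModuleCat.Hom.hom hf'
  have h2 : c • pe1 = 0 := by
    have h3 := LinearMap.congr_fun h1 ps0
    rwa [LinearMap.smul_apply, d1_ps0, LinearMap.zero_apply] at h3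
  have hc0 := smul_pe1_eq_zero h2
  refine ⟨0, ?_⟩
  rw [_root_.map_zero, ← ModuleCat.ofHom_hom (f : PeM ⟶ PeM), hc, hc0, zero_smul]
  rfl

lemma K_exactAt_one : K.ExactAt 1 := by
  rw [HomologicalComplex.exactAt_iff' _ 0 1 2 (by simp) (by simp)]
  rw [ShortComplex.moduleCat_exact_iff]
  intro g1 _
  obtain ⟨c, hc⟩ := hom_ps_pe' (ModuleCat.Hom.hom (g1 : PsM ⟶ PeM))
  refine ⟨ModuleCat.ofHom (c • (LinearMap.id : ↥(P oneE) →ₗ[Aᵐᵒᵖ] ↥(P oneE))), ?_⟩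
  show ModuleCat.ofHom (lmul oneS oneE_mul_arrB) ≫
    ModuleCat.ofHom (c • (LinearMap.id : ↥(P oneE) →ₗ[Aᵐᵒᵖ] ↥(P oneE))) = g1
  rw [← ModuleCat.ofHom_hom (g1 : PsM ⟶ PeM), hc]
  exact congrArg ModuleCat.ofHom (comp_smul_id c)

lemma K_exactAt_big (n : ℕ) : K.ExactAt (n + 3) := by
  rw [HomologicalComplex.exactAt_iff' _ (n + 2) (n + 3) (n + 4) (by simp) (by simp)]
  refine ShortComplex.exact_of_isZero_X₂ _ ?_
  haveI : Subsingleton ↑(resC.X (n + 3)) := inferInstanceAs (Subsingleton PUnit)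
  haveI h : Subsingleton (resC.X (n + 3) ⟶ PeM) :=
    ⟨fun f g => ModuleCat.hom_ext (LinearMap.ext fun x => by
      rw [Subsingleton.elim x 0, _root_.map_zero, _root_.map_zero])⟩
  exact @ModuleCat.isZero_of_subsingleton ℂ _ _
    (inferInstanceAs (Subsingleton (resC.X (n + 3) ⟶ PeM)))

lemma Kd12_zero : K.d 1 2 = 0 := by
  rw [ChainComplex.linearYonedaObj_d]
  refine ModuleCat.hom_ext (DFunLike.ext _ _ fun g1 => ?_)
  obtain ⟨c, hc⟩ := hom_ps_pe' (ModuleCat.Hom.hom (g1 : PsM ⟶ PeM))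
  show resC.d 2 1 ≫ g1 = 0
  rw [resC_d_2_1, ← ModuleCat.ofHom_hom (g1 : PsM ⟶ PeM), hc]
  have : (c • lmul oneS oneE_mul_arrB).comp (lmul oneE oneS_mul_arrA) =
      (0 : ↥(P oneE) →ₗ[Aᵐᵒᵖ] ↥(P oneE)) := by
    rw [LinearMap.smul_comp, lmul_comp_eq_zero, smul_zero]
  exact congrArg ModuleCat.ofHom this

lemma Kd23_zero : K.d 2 3 = 0 := by
  haveI : Subsingleton ↑(resC.X 3) := inferInstanceAs (Subsingleton PUnit)
  haveI h : Subsingleton (resC.X 3 ⟶ PeM) :=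
    ⟨fun f g => ModuleCat.hom_ext (LinearMap.ext fun x => by
      rw [Subsingleton.elim x 0, _root_.map_zero, _root_.map_zero])⟩
  haveI : Subsingleton ↑(K.X 3) := inferInstanceAs (Subsingleton (resC.X 3 ⟶ PeM))
  refine ModuleCat.hom_ext (LinearMap.ext fun f => ?_)
  exact Subsingleton.elim _ _

/-- homology of `K` in degree 2 is `Hom(P(e), P(e))`. -/
noncomputable def homology2Iso : K.homology 2 ≅ K.X 2 :=
  (K.homologyIsoSc' 1 2 3 (by simp) (by simp)) ≪≫
    (ShortComplex.HomologyData.ofZeros (K.sc' 1 2 3)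
      (by show K.d 1 2 = 0; exact Kd12_zero)
      (by show K.d 2 3 = 0; exact Kd23_zero)).left.homologyIso

/-- cast from the categorical hom type -/
noncomputable def toLin (f : PeM ⟶ PeM) : ↥(P oneE) →ₗ[Aᵐᵒᵖ] ↥(P oneE) := f.hom

noncomputable def cLin (c : ℂ) : ↥(P oneE) →ₗ[Aᵐᵒᵖ] ↥(P oneE) := c • LinearMap.id

/-- `Hom(P(e), P(e)) ≃ ℂ`. -/
noncomputable def homEquivC : ↑(K.X 2) ≃ₗ[ℂ] ℂ where
  toFun f := εe (Subtype.val (toLin f pe0))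
  map_add' f g := by
    show εe (Subtype.val (toLin f pe0) + Subtype.val (toLin g pe0)) = _
    rw [_root_.map_add]
  map_smul' c f := by
    show εe (Subtype.val (toLin f pe0) * algebraMap ℂ A c) =
      c • εe (Subtype.val (toLin f pe0))
    rw [_root_.map_mul, AlgHom.commutes, smul_eq_mul, mul_comm, Algebra.algebraMap_self_apply]
  invFun c := ModuleCat.ofHom (cLin c)
  left_inv f := by
    obtain ⟨c, hc⟩ := hom_pe_pe (toLin f)
    have hval : εe (Subtype.val (toLin f pe0)) = c := by
      rw [hc pe0, Submodule.coe_smul_of_tower]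
      show εe (c • oneE) = c
      rw [_root_.map_smul, εe_oneE, smul_eq_mul, mul_one]
    show ModuleCat.ofHom (cLin (εe (Subtype.val (toLin f pe0)))) = f
    rw [hval]
    refine ModuleCat.hom_ext ?_
    show cLin c = toLin f
    exact LinearMap.ext fun x => (hc x).symm
  right_inv c := by
    show εe (Subtype.val ((cLin c) pe0)) = c
    rw [cLin, LinearMap.smul_apply, Submodule.coe_smul_of_tower]
    show εe (c • oneE) = c
    rw [_root_.map_smul, εe_oneE, smul_eq_mul, mul_one]

end Sl2Q

namespace Sl2Q
open CategoryTheory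

lemma subsingleton_of_isZero {M : ModuleCat ℂ} (h : Limits.IsZero M) : Subsingleton ↑M := by
  have h0 : (𝟙 M : M ⟶ M) = 0 := h.eq_of_src _ _
  refine ⟨fun a b => ?_⟩
  rw [show a = (𝟙 M : M ⟶ M) a from rfl, show b = (𝟙 M : M ⟶ M) b from rfl, h0]
  rw [show (0 : M ⟶ M) a = 0 from rfl, show (0 : M ⟶ M) b = 0 from rfl]

lemma K_homology_isZero : ∀ n : ℕ, n ≠ 2 → Limits.IsZero (K.homology n)
  | 0, _ => (HomologicalComplex.exactAt_iff_isZero_homology _ _).mp K_exactAt_zero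
  | 1, _ => (HomologicalComplex.exactAt_iff_isZero_homology _ _).mp K_exactAt_one
  | 2, h => absurd rfl h
  | (n + 3), _ => (HomologicalComplex.exactAt_iff_isZero_homology _ _).mp (K_exactAt_big n)

lemma hom_Se_Pe_zero (f : Se →ₗ[Aᵐᵒᵖ] ↥(P oneE)) : f = 0 := by
  refine LinearMap.ext fun c => ?_
  have hc1 : (op oneE : Aᵐᵒᵖ) • c = c := by rw [Se.smul_def, unop_op, εe_oneE, one_smul]
  have hc2 : (op arrB : Aᵐᵒᵖ) • c = (0 : Se) := by
    rw [Se.smul_def, unop_op, εe_arrB, zero_smul]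
  have h1 : f c = (op oneE : Aᵐᵒᵖ) • f c := by
    conv_lhs => rw [← hc1]
    rw [_root_.map_smul]
  have h2 : (op arrB : Aᵐᵒᵖ) • f c = 0 := by
    rw [← _root_.map_smul, hc2, _root_.map_zero]
  obtain ⟨c0, c1, hv⟩ := pe_rep (f c)
  have vval : ((f c : ↥(P oneE)) : A) = c0 • oneE + c1 • arrB := by rw [hv]; rfl
  have h1v : c0 • oneE + c1 • arrB = c0 • oneE := by
    conv_lhs => rw [← vval]
    have := congrArg Subtype.val h1
    rw [smul_val, unop_op, vval] at this
    rw [vval, this, add_mul, smul_mul_assoc, smul_mul_assoc, r_ee, r_be, smul_zero, add_zero]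
  have hc1' : c1 • arrB = 0 := by
    have := h1v
    nth_rewrite 2 [← add_zero (c0 • oneE)] at this
    exact add_left_cancel this
  have h2v : c0 • arrB = 0 := by
    have := congrArg Subtype.val h2
    rw [smul_val, unop_op, vval, add_mul, smul_mul_assoc, smul_mul_assoc,
      oneE_mul_arrB, r_bb, smul_zero, add_zero] at this
    exact this
  have hc0 : c0 = 0 := smul_arrB_eq_zero h2v
  have hc1'' : c1 = 0 := smul_arrB_eq_zero hc1'
  refine Subtype.ext ?_
  rw [vval, hc0, hc1'', zero_smul, zero_smul, add_zero]
  rfl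

/-- `Ext²_A(S_e, P(e)) ≅ ℂ` and `Ext^n_A(S_e, P(e)) = 0` for
`n ≠ 2`; in particular `Hom_A(S_e, P(e)) = 0` and `Ext¹_A(S_e, P(e)) = 0`. -/
theorem ext_Se_Pe :
    Module.finrank ℂ (ExtA SeM PeM 2) = 1 ∧
    (∀ n : ℕ, n ≠ 2 → Subsingleton (ExtA SeM PeM n)) ∧
    (∀ f : Se →ₗ[Aᵐᵒᵖ] ↥(P oneE), f = 0) ∧
    Subsingleton (ExtA SeM PeM 1) := by
  have hsub : ∀ n : ℕ, n ≠ 2 → Subsingleton (ExtA SeM PeM n) := by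
    intro n hn
    exact subsingleton_of_isZero
      ((K_homology_isZero n hn).of_iso (resProj.isoExt (R := ℂ) n PeM))
  refine ⟨?_, hsub, hom_Se_Pe_zero, hsub 1 (by norm_num)⟩
  have e2 : ↑(ExtA SeM PeM 2) ≃ₗ[ℂ] ℂ :=
    ((resProj.isoExt (R := ℂ) 2 PeM).toLinearEquiv).trans
      ((homology2Iso.toLinearEquiv).trans homEquivC)
  exact e2.finrank_eq.trans (Module.finrank_self ℂ)


end Sl2Q
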